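/- The modified Hodge star *_g maps the space H_r Λᵏ of k-forms with homogeneous polynomial coefficients of degree r isomorphically onto the space H̊_{r+k} Λ^{n+1−k} of (n+1−k)-forms with homogeneous polynomial coefficients of degree r+k whose tangential trace on the boundary of the orthant vanishes. In particular, every homogeneous polynomial form with vanishing boundary trace equals *_g of a polynomial form. -/

import Mathlib

open scoped BigOperators
open Classical

namespace FEEC

variable {M : Type*} [AddCommGroup M] [Module ℝ M]

/-- The wedge product of two real-valued alternating maps. -/
noncomputable def wedge {k l : ℕ} (α : M [⋀^Fin k]→ₗ[ℝ] ℝ) (β : M [⋀^Fin l]→ₗ[ℝ] ℝ) :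
    M [⋀^Fin (k + l)]→ₗ[ℝ] ℝ :=
  (((TensorProduct.lid ℝ ℝ).toLinearMap).compAlternatingMap (α.domCoprod β)).domDomCongr
    finSumFinEquiv

/-- A linear functional, regarded as an alternating 1-form. -/
noncomputable def oneForm (θ : M →ₗ[ℝ] ℝ) : M [⋀^Fin 1]→ₗ[ℝ] ℝ :=
  AlternatingMap.ofSubsingleton ℝ M ℝ (0 : Fin 1) θ

/-- Left exterior multiplication of a `k`-form by the 1-form `θ`. -/
noncomputable def lwedge {k : ℕ} (θ : M →ₗ[ℝ] ℝ) (α : M [⋀^Fin k]→ₗ[ℝ] ℝ) :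
    M [⋀^Fin (k + 1)]→ₗ[ℝ] ℝ :=
  (wedge (oneForm θ) α).domDomCongr (finCongr (Nat.add_comm 1 k))

/-- Reinterpret a `k`-form as an `l`-form along an equality `k = l`. -/
noncomputable def castForm {k l : ℕ} (h : k = l) (α : M [⋀^Fin k]→ₗ[ℝ] ℝ) :
    M [⋀^Fin l]→ₗ[ℝ] ℝ :=
  α.domDomCongr (finCongr h)

/-- The wedge product of a family of covectors, `θ₁ ∧ ⋯ ∧ θₖ`; its value on
`(v₁, …, v_k)` is `det (θᵢ (v_j))`. -/
noncomputable def covWedge {k : ℕ} (φ : Fin k → (M →ₗ[ℝ] ℝ)) : M [⋀^Fin k]→ₗ[ℝ] ℝ :=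
  Matrix.detRowAlternating.compLinearMap (LinearMap.pi φ)

/-- Points of `ℝ^N`. -/
abbrev Vec (N : ℕ) := Fin N → ℝ

/-- A differential `k`-form on `ℝ^N`: an alternating-map-valued function. -/
abbrev Form (N k : ℕ) := Vec N → (Vec N [⋀^Fin k]→ₗ[ℝ] ℝ)

/-- `s = x₁ + ⋯ + x_N`. -/
noncomputable def sFun (N : ℕ) (x : Vec N) : ℝ := ∑ i, x i

/-- The constant 1-form `ds = dx₁ + ⋯ + dx_N`. -/
noncomputable def ds (N : ℕ) : Vec N →ₗ[ℝ] ℝ := ∑ i, LinearMap.proj i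

/-- The exterior derivative of a `k`-form at a point, characterized by the standard
coordinate-free formula `(dω)ₓ(v₀,…,v_k) = Σᵢ (-1)ⁱ (∂_{vᵢ} ω)(v₀,…,v̂ᵢ,…,v_k)`
(defined by definite description; junk value `0` if no alternating map satisfies it). -/
noncomputable def extDeriv {N k : ℕ} (ω : Form N k) (x : Vec N) :
    Vec N [⋀^Fin (k + 1)]→ₗ[ℝ] ℝ :=
  if h : ∃ η : Vec N [⋀^Fin (k + 1)]→ₗ[ℝ] ℝ, ∀ v : Fin (k + 1) → Vec N,
      η v = ∑ i : Fin (k + 1),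
        (-1 : ℝ) ^ (i : ℕ) * fderiv ℝ (fun y => ω y (fun j => v (i.succAbove j))) x (v i)
  then h.choose else 0

/-- Interior product with the Euler vector field `X = Σᵢ xᵢ ∂ᵢ` (which at the point `x`
is the vector `x` itself). -/
noncomputable def iEuler {N k : ℕ} (ω : Form N (k + 1)) : Form N k :=
  fun x => (ω x).curryLeft x

/-- The Lie derivative along the Euler vector field, via Cartan's formula
`𝔏_X = d ∘ i_X + i_X ∘ d` (with `i_X = 0` on 0-forms). -/
noncomputable def lieX {N : ℕ} : ∀ {k : ℕ}, Form N k → Form N k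
  | 0, ω => fun x => (extDeriv ω x).curryLeft x
  | (_ + 1), ω => fun x => extDeriv (iEuler ω) x + (extDeriv ω x).curryLeft x

/-- The modified exterior derivative `𝐝 = d − s⁻¹ ds ∧ 𝔏_X`. -/
noncomputable def bd {N k : ℕ} (ω : Form N k) : Form N (k + 1) :=
  fun x => extDeriv ω x - (sFun N x)⁻¹ • lwedge (ds N) (lieX ω x)

/-- `ω` has coefficients that are homogeneous polynomials of degree `r`. -/
def HomPolyForm {N k : ℕ} (r : ℕ) (ω : Form N k) : Prop :=
  ∀ v : Fin k → Vec N, ∃ P : MvPolynomial (Fin N) ℝ,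
    P.IsHomogeneous r ∧ ∀ x, MvPolynomial.eval x P = ω x v

/-- The inner product of two `k`-forms induced (via Gram determinants) by the diagonal
metric `⟨dxᵢ, dxᵢ⟩ = xᵢ` at the point `x`: explicitly
`⟨α, β⟩ = Σ_{i₁<⋯<i_k} x_{i₁}⋯x_{i_k} α(e_{i₁},…,e_{i_k}) β(e_{i₁},…,e_{i_k})`. -/
noncomputable def gInner {N k : ℕ} (x : Vec N) (α β : Vec N [⋀^Fin k]→ₗ[ℝ] ℝ) : ℝ :=
  ∑ s : Finset (Fin N), if h : s.card = k then
    (∏ i ∈ s, x i) * α (fun j => Pi.single ((s.orderIsoOfFin h j : Fin N)) 1)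
      * β (fun j => Pi.single ((s.orderIsoOfFin h j : Fin N)) 1)
  else 0

/-- The standard Euclidean volume form `dx₁ ∧ ⋯ ∧ dx_N`. -/
noncomputable def vol (N : ℕ) : Vec N [⋀^Fin N]→ₗ[ℝ] ℝ := Matrix.detRowAlternating

/-- The modified Hodge star `*_g` at the point `x`: the unique `l`-form `γ` with
`α ∧ γ = ⟨α, β⟩_g vol` for all `k`-forms `α` (junk value `0` if none exists). -/
noncomputable def hodge {N k l : ℕ} (h : k + l = N) (x : Vec N)
    (β : Vec N [⋀^Fin k]→ₗ[ℝ] ℝ) : Vec N [⋀^Fin l]→ₗ[ℝ] ℝ :=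
  if H : ∃ γ : Vec N [⋀^Fin l]→ₗ[ℝ] ℝ, ∀ α : Vec N [⋀^Fin k]→ₗ[ℝ] ℝ,
      castForm h (wedge α γ) = gInner x α β • vol N
  then H.choose else 0

/-- Pullback (restriction) of a `k`-form to the `i`-th coordinate hyperplane `{xᵢ = 0}`. -/
noncomputable def faceRestrict {N k : ℕ} (i : Fin N) (α : Vec N [⋀^Fin k]→ₗ[ℝ] ℝ) :
    (LinearMap.ker (LinearMap.proj i : Vec N →ₗ[ℝ] ℝ)) [⋀^Fin k]→ₗ[ℝ] ℝ :=
  α.compLinearMap (LinearMap.ker (LinearMap.proj i : Vec N →ₗ[ℝ] ℝ)).subtype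


-- auxiliary development


/-- standard basis vectors -/
noncomputable def E (N : ℕ) (i : Fin N) : Vec N := Pi.single i 1

/-- the subtype of `k`-element subsets -/
abbrev Sub (N k : ℕ) := {s : Finset (Fin N) // s.card = k}

/-- increasing tuple of basis vectors indexed by a set -/
noncomputable def Es {N k : ℕ} (S : Sub N k) : Fin k → Vec N :=
  fun j => E N (S.1.orderIsoOfFin S.2 j)

/-- basis `k`-form `dx_S` -/
noncomputable def bform {N k : ℕ} (S : Sub N k) : Vec N [⋀^Fin k]→ₗ[ℝ] ℝ :=
  covWedge (fun j => LinearMap.proj (S.1.orderIsoOfFin S.2 j : Fin N))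

lemma sum_apply {N k : ℕ} {ι : Type*} (s : Finset ι) (f : ι → (Vec N [⋀^Fin k]→ₗ[ℝ] ℝ))
    (v : Fin k → Vec N) : (∑ a ∈ s, f a) v = ∑ a ∈ s, f a v := by
  induction s using Finset.induction_on with
  | empty => simp
  | insert a s h ih => rw [Finset.sum_insert h, Finset.sum_insert h, AlternatingMap.add_apply, ih]

lemma covWedge_apply {N k : ℕ} (φ : Fin k → (Vec N →ₗ[ℝ] ℝ)) (v : Fin k → Vec N) :
    covWedge φ v = Matrix.det (Matrix.of fun i j => φ j (v i)) := rfl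

lemma bform_Es {N k : ℕ} (S T : Sub N k) :
    bform T (Es S) = if S = T then 1 else 0 := by
  rw [bform, covWedge_apply]
  split_ifs with hST
  · subst hST
    have : (Matrix.of fun i j => (LinearMap.proj (S.1.orderIsoOfFin S.2 j : Fin N) : Vec N →ₗ[ℝ] ℝ) (Es S i)) = (1 : Matrix (Fin k) (Fin k) ℝ) := by
      ext i j
      simp only [Matrix.of_apply, LinearMap.proj_apply, Es, E, Matrix.one_apply]
      rw [Pi.single_apply]
      by_cases hij : i = j
      · subst hij; simp
      · rw [if_neg, if_neg hij]
        intro hc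
        exact hij (((S.1.orderIsoOfFin S.2).toOrderEmbedding.trans (OrderEmbedding.subtype _)).injective (by simpa using hc.symm) : i = j)
    rw [this, Matrix.det_one]
  · -- find an element of T not in S
    have hTS : ¬ T.1 ⊆ S.1 := by
      intro hsub
      exact hST (Subtype.ext (Finset.eq_of_subset_of_card_le hsub (by rw [S.2, T.2])).symm)
    obtain ⟨a, haT, haS⟩ := Finset.not_subset.mp hTS
    set j0 : Fin k := (T.1.orderIsoOfFin T.2).symm ⟨a, haT⟩ with hj0
    apply Matrix.det_eq_zero_of_column_eq_zero j0
    intro i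
    simp only [Matrix.of_apply, LinearMap.proj_apply, Es, E]
    rw [Pi.single_apply, if_neg]
    intro hc
    apply haS
    have : ((T.1.orderIsoOfFin T.2) j0 : Fin N) = a := by rw [hj0]; simp
    rw [this] at hc
    rw [hc]
    exact Finset.coe_mem _

lemma map_perm_real {N k : ℕ} (g : Vec N [⋀^Fin k]→ₗ[ℝ] ℝ) (v : Fin k → Vec N)
    (σ : Equiv.Perm (Fin k)) :
    g (v ∘ σ) = ((Equiv.Perm.sign σ : ℤ) : ℝ) * g v := by
  rw [AlternatingMap.map_perm]
  rcases Int.units_eq_one_or (Equiv.Perm.sign σ) with h | h <;> simp [h]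

/-- tuple of basis vectors along an injective map equals `Es` of the image, permuted -/
lemma exists_perm_of_injective {N k : ℕ} (v : Fin k → Fin N) (hv : Function.Injective v) :
    ∃ (S : Sub N k) (σ : Equiv.Perm (Fin k)),
      (fun i => E N (v i)) = Es S ∘ σ := by
  classical
  set t : Finset (Fin N) := Finset.image v Finset.univ with ht
  have hcard : t.card = k := by
    rw [ht, Finset.card_image_of_injective _ hv, Finset.card_univ, Fintype.card_fin]
  refine ⟨⟨t, hcard⟩, ?_⟩
  set f : Fin k → Fin k := fun i => (t.orderIsoOfFin hcard).symm ⟨v i, by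
    rw [ht]; exact Finset.mem_image_of_mem v (Finset.mem_univ i)⟩ with hf
  have hfinj : Function.Injective f := by
    intro a b hab
    apply hv
    have := congrArg (fun z => ((t.orderIsoOfFin hcard) z : Fin N)) hab
    simpa [hf] using this
  have hfbij : Function.Bijective f := (Finite.injective_iff_bijective).mp hfinj
  refine ⟨Equiv.ofBijective f hfbij, ?_⟩
  funext i
  simp only [Function.comp_apply, Equiv.ofBijective_apply, Es, hf]
  congr 1
  simp

lemma expand {N k : ℕ} (α : Vec N [⋀^Fin k]→ₗ[ℝ] ℝ) :
    α = ∑ S : Sub N k, α (Es S) • bform S := by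
  apply Module.Basis.ext_alternating (Pi.basisFun ℝ (Fin N))
  intro v hv
  have hbas : (fun i => (Pi.basisFun ℝ (Fin N)) (v i)) = fun i => E N (v i) := by
    funext i; simp [E, Pi.basisFun_apply]
  rw [hbas]
  obtain ⟨S, σ, hES⟩ := exists_perm_of_injective v hv
  rw [hES, map_perm_real, map_perm_real]
  congr 1
  rw [sum_apply]
  have : ∀ T : Sub N k, (α (Es T) • bform T) (Es S) = if S = T then α (Es S) else 0 := by
    intro T
    rw [AlternatingMap.smul_apply, bform_Es, smul_eq_mul]
    split_ifs with h
    · subst h; ring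
    · ring
  rw [Finset.sum_congr rfl (fun T _ => this T)]
  simp

lemma ext_of_Es {N k : ℕ} {α β : Vec N [⋀^Fin k]→ₗ[ℝ] ℝ}
    (h : ∀ S : Sub N k, α (Es S) = β (Es S)) : α = β := by
  rw [expand α, expand β]
  exact Finset.sum_congr rfl fun S _ => by rw [h]

lemma vol_E {N : ℕ} : vol N (fun i => E N i) = 1 := by
  have : (Matrix.of fun i j => E N i j) = (1 : Matrix (Fin N) (Fin N) ℝ) := by
    ext i j
    simp [E, Matrix.one_apply, Pi.single_apply, eq_comm]
  show Matrix.det (Matrix.of fun i j => E N i j) = 1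
  rw [this, Matrix.det_one]

/-- every top form is a multiple of vol -/
lemma top_eq {N : ℕ} (f : Vec N [⋀^Fin N]→ₗ[ℝ] ℝ) :
    f = f (fun i => E N i) • vol N := by
  apply Module.Basis.ext_alternating (Pi.basisFun ℝ (Fin N))
  intro v hv
  have hbas : (fun i => (Pi.basisFun ℝ (Fin N)) (v i)) = fun i => E N (v i) := by
    funext i; simp [E, Pi.basisFun_apply]
  rw [hbas]
  have hbij : Function.Bijective v := (Finite.injective_iff_bijective).mp hv
  set σ := Equiv.ofBijective v hbij with hσ
  have hvE : (fun i => E N (v i)) = (fun i => E N i) ∘ σ := by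
    funext i; simp [hσ]
  rw [hvE, map_perm_real, map_perm_real, AlternatingMap.smul_apply, vol_E]
  simp [mul_comm]

section Shuffles
variable {N k l : ℕ}

/-- index equivalence -/
noncomputable def Feq (hkl : k + l = N) : (Fin k ⊕ Fin l) ≃ Fin N :=
  finSumFinEquiv.trans (finCongr hkl)

lemma card_compl_sub (hkl : k + l = N) (S : Sub N k) : (S.1ᶜ).card = l := by
  rw [Finset.card_compl, S.2, Fintype.card_fin]; omega

/-- complement map on subsets -/
noncomputable def cS (hkl : k + l = N) (S : Sub N k) : Sub N l := ⟨S.1ᶜ, card_compl_sub hkl S⟩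

/-- the order-preserving identification of `Fin k ⊕ Fin l` with `Fin N` splitting along `S` -/
noncomputable def rho (hkl : k + l = N) (S : Sub N k) : (Fin k ⊕ Fin l) ≃ Fin N :=
  (Equiv.sumCongr (S.1.orderIsoOfFin S.2).toEquiv ((cS hkl S).1.orderIsoOfFin (cS hkl S).2).toEquiv).trans
    ((Equiv.sumCongr (Equiv.refl _) (Equiv.subtypeEquivRight (fun x => Finset.mem_compl))).trans
      (Equiv.sumCompl (· ∈ S.1)))

lemma rho_inl (hkl : k + l = N) (S : Sub N k) (i : Fin k) :
    rho hkl S (Sum.inl i) = (S.1.orderIsoOfFin S.2 i : Fin N) := rfl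

lemma rho_inr (hkl : k + l = N) (S : Sub N k) (j : Fin l) :
    rho hkl S (Sum.inr j) = ((cS hkl S).1.orderIsoOfFin (cS hkl S).2 j : Fin N) := rfl

lemma rho_inl_mem (hkl : k + l = N) (S : Sub N k) (i : Fin k) :
    rho hkl S (Sum.inl i) ∈ S.1 := by rw [rho_inl]; exact Finset.coe_mem _

lemma rho_inr_not_mem (hkl : k + l = N) (S : Sub N k) (j : Fin l) :
    rho hkl S (Sum.inr j) ∉ S.1 := by
  rw [rho_inr]
  have h2 : ((cS hkl S).1.orderIsoOfFin (cS hkl S).2 j : Fin N) ∈ S.1ᶜ :=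
    Finset.coe_mem _
  exact Finset.mem_compl.mp h2

lemma rho_symm_inl (hkl : k + l = N) (S : Sub N k) {a : Fin N} (ha : a ∈ S.1) :
    ∃ i, (rho hkl S).symm a = Sum.inl i := by
  rcases h : (rho hkl S).symm a with i | j
  · exact ⟨i, rfl⟩
  · exfalso
    have : a = rho hkl S (Sum.inr j) := by rw [← h, Equiv.apply_symm_apply]
    exact rho_inr_not_mem hkl S j (this ▸ ha)

/-- the shuffle permutation attached to `S` -/
noncomputable def sigmaS (hkl : k + l = N) (S : Sub N k) : Equiv.Perm (Fin k ⊕ Fin l) :=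
  (rho hkl S).trans (Feq hkl).symm

lemma Feq_sigmaS (hkl : k + l = N) (S : Sub N k) (z : Fin k ⊕ Fin l) :
    Feq hkl (sigmaS hkl S z) = rho hkl S z := by
  simp [sigmaS]

lemma sigmaS_symm (hkl : k + l = N) (S : Sub N k) (y : Fin k ⊕ Fin l) :
    (sigmaS hkl S).symm y = (rho hkl S).symm (Feq hkl y) := by
  simp [sigmaS]

/-- the sign of the shuffle, as a real number -/
noncomputable def sgn (hkl : k + l = N) (S : Sub N k) : ℝ :=
  ((Equiv.Perm.sign (sigmaS hkl S) : ℤ) : ℝ)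

lemma sgn_mul_self (hkl : k + l = N) (S : Sub N k) : sgn hkl S * sgn hkl S = 1 := by
  rw [sgn]
  rcases Int.units_eq_one_or (Equiv.Perm.sign (sigmaS hkl S)) with h | h <;> rw [h] <;> norm_num

lemma image_sigmaS (hkl : k + l = N) (S : Sub N k) :
    Finset.image (fun i => Feq hkl (sigmaS hkl S (Sum.inl i))) Finset.univ = S.1 := by
  apply Finset.eq_of_subset_of_card_le
  · intro a ha
    obtain ⟨i, _, rfl⟩ := Finset.mem_image.mp ha
    rw [Feq_sigmaS]
    exact rho_inl_mem hkl S i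
  · rw [S.2, Finset.card_image_of_injective]
    · simp
    · intro a b hab
      have := (Feq hkl).injective hab
      have := (sigmaS hkl S).injective this
      exact Sum.inl_injective this

lemma quot_eq_of_mapsTo (hkl : k + l = N) (S : Sub N k) (σ : Equiv.Perm (Fin k ⊕ Fin l))
    (h : ∀ i : Fin k, Feq hkl (σ (Sum.inl i)) ∈ S.1) :
    (Quotient.mk'' (sigmaS hkl S) : Equiv.Perm.ModSumCongr (Fin k) (Fin l)) = Quotient.mk'' σ := by
  rw [Quotient.eq'']
  rw [QuotientGroup.leftRel_apply]
  apply Equiv.Perm.mem_sumCongrHom_range_of_perm_mapsTo_inl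
  rintro z ⟨i, rfl⟩
  have heq : (sigmaS hkl S)⁻¹ (σ (Sum.inl i)) = (rho hkl S).symm (Feq hkl (σ (Sum.inl i))) := by
    show (sigmaS hkl S).symm _ = _
    rw [sigmaS_symm hkl S]
  obtain ⟨i', hi'⟩ := rho_symm_inl hkl S (h i)
  exact ⟨i', by rw [Equiv.Perm.coe_mul, Function.comp_apply, heq, hi']⟩

lemma sigmaS_bijective (hkl : k + l = N) :
    Function.Bijective (fun S : Sub N k =>
      (Quotient.mk'' (sigmaS hkl S) : Equiv.Perm.ModSumCongr (Fin k) (Fin l))) := by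
  constructor
  · intro S T hST
    rw [Quotient.eq'', QuotientGroup.leftRel_apply] at hST
    obtain ⟨⟨sl, sr⟩, hx⟩ := hST
    -- sigmaS T = sigmaS S * sumCongr sl sr
    have hT : sigmaS hkl T = sigmaS hkl S * Equiv.Perm.sumCongrHom _ _ (sl, sr) := by
      rw [hx]; group
    have hsub : T.1 ⊆ S.1 := by
      intro a haT
      -- a = rho T (inl i) for some i
      obtain ⟨i, hi⟩ := rho_symm_inl hkl T haT
      have ha : a = Feq hkl (sigmaS hkl T (Sum.inl i)) := by
        rw [Feq_sigmaS, ← hi, Equiv.apply_symm_apply]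
      rw [ha, hT]
      simp only [Equiv.Perm.mul_apply, Equiv.Perm.sumCongrHom_apply, Equiv.Perm.sumCongr_apply,
        Sum.map_inl]
      rw [Feq_sigmaS]
      exact rho_inl_mem hkl S _
    exact Subtype.ext (Finset.eq_of_subset_of_card_le hsub (by rw [S.2, T.2])).symm
  · intro q
    induction q using Quotient.inductionOn' with
    | h σ =>
      refine ⟨⟨Finset.image (fun i => Feq hkl (σ (Sum.inl i))) Finset.univ, ?_⟩, ?_⟩
      · rw [Finset.card_image_of_injective, Finset.card_univ, Fintype.card_fin]
        intro a b hab
        exact Sum.inl_injective (σ.injective ((Feq hkl).injective hab))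
      · apply quot_eq_of_mapsTo
        intro i
        exact Finset.mem_image_of_mem _ (Finset.mem_univ i)

end Shuffles

section WedgeEval
variable {N k l : ℕ}

lemma w_sigmaS_inl (hkl : k + l = N) (S : Sub N k) (i : Fin k) :
    E N (Feq hkl (sigmaS hkl S (Sum.inl i))) = Es S i := by
  rw [Feq_sigmaS, rho_inl]; rfl

lemma w_sigmaS_inr (hkl : k + l = N) (S : Sub N k) (j : Fin l) :
    E N (Feq hkl (sigmaS hkl S (Sum.inr j))) = Es (cS hkl S) j := by
  rw [Feq_sigmaS, rho_inr]; rfl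

set_option synthInstance.maxHeartbeats 400000 in
/-- The key evaluation of a wedge product on the full standard basis. -/
lemma wedge_E (hkl : k + l = N) (α : Vec N [⋀^Fin k]→ₗ[ℝ] ℝ) (γ : Vec N [⋀^Fin l]→ₗ[ℝ] ℝ) :
    (castForm hkl (wedge α γ)) (fun i => E N i)
      = ∑ S : Sub N k, sgn hkl S * (α (Es S) * γ (Es (cS hkl S))) := by
  have hLHS : (castForm hkl (wedge α γ)) (fun i => E N i)
      = TensorProduct.lid ℝ ℝ ((α.domCoprod γ) (fun z => E N (Feq hkl z))) := rfl
  rw [hLHS, AlternatingMap.domCoprod_apply, MultilinearMap.sum_apply]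
  rw [← LinearEquiv.coe_coe, map_sum]
  have key := Fintype.sum_bijective _ (sigmaS_bijective hkl)
    (fun S => sgn hkl S * (α (Es S) * γ (Es (cS hkl S))))
    (fun q => TensorProduct.lid ℝ ℝ
      (AlternatingMap.domCoprod.summand α γ q (fun z => E N (Feq hkl z)))) ?_
  · refine Eq.trans ?_ key.symm
    congr 1
  intro S
  rw [AlternatingMap.domCoprod.summand_mk'']
  rw [MultilinearMap.smul_apply, MultilinearMap.domDomCongr_apply, MultilinearMap.domCoprod_apply]
  have h1 : (fun i => E N (Feq hkl (sigmaS hkl S (Sum.inl i)))) = Es S := by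
    funext i; exact w_sigmaS_inl hkl S i
  have h2 : (fun j => E N (Feq hkl (sigmaS hkl S (Sum.inr j)))) = Es (cS hkl S) := by
    funext j; exact w_sigmaS_inr hkl S j
  simp only [AlternatingMap.coe_multilinearMap]
  rw [h1, h2]
  rcases Int.units_eq_one_or (Equiv.Perm.sign (sigmaS hkl S)) with h | h <;>
    rw [sgn, h] <;>
    simp [TensorProduct.lid_tmul, smul_eq_mul, Units.smul_def] <;> ring

end WedgeEval

section Hodge
variable {N k l : ℕ}

/-- reverse complement -/
noncomputable def cS2 (hkl : k + l = N) (T : Sub N l) : Sub N k :=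
  ⟨T.1ᶜ, by rw [Finset.card_compl, T.2, Fintype.card_fin]; omega⟩

lemma cS_cS2 (hkl : k + l = N) (T : Sub N l) : cS hkl (cS2 hkl T) = T :=
  Subtype.ext (by simp [cS, cS2])

lemma cS2_cS (hkl : k + l = N) (S : Sub N k) : cS2 hkl (cS hkl S) = S :=
  Subtype.ext (by simp [cS, cS2])

lemma cS_injective (hkl : k + l = N) : Function.Injective (cS hkl) := by
  intro S T h
  have := congrArg (cS2 hkl) h
  rwa [cS2_cS, cS2_cS] at this

lemma gInner_eq (x : Vec N) (α β : Vec N [⋀^Fin k]→ₗ[ℝ] ℝ) :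
    gInner x α β = ∑ S : Sub N k, (∏ i ∈ S.1, x i) * α (Es S) * β (Es S) := by
  rw [gInner]
  rw [← Equiv.sum_comp (Equiv.sumCompl (fun s : Finset (Fin N) => s.card = k))]
  rw [Fintype.sum_sum_type]
  have h2 : ∀ S' : {s : Finset (Fin N) // ¬ s.card = k},
      (if h : (Equiv.sumCompl (fun s : Finset (Fin N) => s.card = k) (Sum.inr S')).card = k then
        (∏ i ∈ (Equiv.sumCompl (fun s : Finset (Fin N) => s.card = k) (Sum.inr S')), x i) *
          α (fun j => Pi.single ((((Equiv.sumCompl (fun s : Finset (Fin N) => s.card = k) (Sum.inr S'))).orderIsoOfFin h j : Fin N)) 1) *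
          β (fun j => Pi.single ((((Equiv.sumCompl (fun s : Finset (Fin N) => s.card = k) (Sum.inr S'))).orderIsoOfFin h j : Fin N)) 1)
      else 0) = 0 := by
    intro S'
    rw [dif_neg]
    simpa using S'.2
  rw [Finset.sum_congr rfl (fun S' _ => h2 S'), Finset.sum_const_zero, add_zero]
  apply Finset.sum_congr rfl
  intro S _
  rw [dif_pos (by simpa using S.2)]
  rfl

/-- the explicit formula for the Hodge star -/
noncomputable def Phi (hkl : k + l = N) (x : Vec N) (β : Vec N [⋀^Fin k]→ₗ[ℝ] ℝ) :
    Vec N [⋀^Fin l]→ₗ[ℝ] ℝ :=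
  ∑ S : Sub N k, (sgn hkl S * ((∏ i ∈ S.1, x i) * β (Es S))) • bform (cS hkl S)

lemma Phi_Es (hkl : k + l = N) (x : Vec N) (β : Vec N [⋀^Fin k]→ₗ[ℝ] ℝ) (S : Sub N k) :
    Phi hkl x β (Es (cS hkl S)) = sgn hkl S * ((∏ i ∈ S.1, x i) * β (Es S)) := by
  rw [Phi, sum_apply]
  have : ∀ T : Sub N k, ((sgn hkl T * ((∏ i ∈ T.1, x i) * β (Es T))) • bform (cS hkl T)) (Es (cS hkl S))
      = if S = T then sgn hkl S * ((∏ i ∈ S.1, x i) * β (Es S)) else 0 := by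
    intro T
    rw [AlternatingMap.smul_apply, bform_Es, smul_eq_mul]
    by_cases h : S = T
    · subst h; simp
    · rw [if_neg (fun hc => h (cS_injective hkl hc)), if_neg h, mul_zero]
  rw [Finset.sum_congr rfl (fun T _ => this T)]
  simp

lemma Phi_spec (hkl : k + l = N) (x : Vec N) (β : Vec N [⋀^Fin k]→ₗ[ℝ] ℝ)
    (α : Vec N [⋀^Fin k]→ₗ[ℝ] ℝ) :
    castForm hkl (wedge α (Phi hkl x β)) = gInner x α β • vol N := by
  rw [top_eq (castForm hkl (wedge α (Phi hkl x β)))]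
  congr 1
  rw [wedge_E, gInner_eq]
  apply Finset.sum_congr rfl
  intro S _
  rw [Phi_Es]
  linear_combination ((∏ i ∈ S.1, x i) * α (Es S) * β (Es S)) * sgn_mul_self hkl S

lemma hodge_val (hkl : k + l = N) (x : Vec N) (β : Vec N [⋀^Fin k]→ₗ[ℝ] ℝ)
    (γ : Vec N [⋀^Fin l]→ₗ[ℝ] ℝ)
    (hγ : ∀ α : Vec N [⋀^Fin k]→ₗ[ℝ] ℝ, castForm hkl (wedge α γ) = gInner x α β • vol N)
    (T : Sub N l) :
    sgn hkl (cS2 hkl T) * γ (Es T) = gInner x (bform (cS2 hkl T)) β := by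
  have h1 := DFunLike.congr_fun (hγ (bform (cS2 hkl T))) (fun i => E N i)
  rw [wedge_E] at h1
  rw [AlternatingMap.smul_apply, vol_E, smul_eq_mul, mul_one] at h1
  rw [← h1]
  have : ∀ S : Sub N k, sgn hkl S * (bform (cS2 hkl T) (Es S) * γ (Es (cS hkl S)))
      = if cS2 hkl T = S then sgn hkl (cS2 hkl T) * γ (Es T) else 0 := by
    intro S
    rw [bform_Es]
    by_cases h : cS2 hkl T = S
    · subst h; rw [if_pos rfl, if_pos rfl, cS_cS2]; ring
    · rw [if_neg (fun hc => h hc.symm), if_neg h]; ring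
  rw [Finset.sum_congr rfl (fun S _ => this S)]
  simp

lemma sgn_ne_zero (hkl : k + l = N) (S : Sub N k) : sgn hkl S ≠ 0 := by
  intro h
  have := sgn_mul_self hkl S
  rw [h, mul_zero] at this
  norm_num at this

lemma hodge_eq (hkl : k + l = N) (x : Vec N) (β : Vec N [⋀^Fin k]→ₗ[ℝ] ℝ) :
    hodge hkl x β = Phi hkl x β := by
  rw [hodge, dif_pos ⟨Phi hkl x β, Phi_spec hkl x β⟩]
  set H : ∃ γ : Vec N [⋀^Fin l]→ₗ[ℝ] ℝ, ∀ α : Vec N [⋀^Fin k]→ₗ[ℝ] ℝ,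
      castForm hkl (wedge α γ) = gInner x α β • vol N := ⟨Phi hkl x β, Phi_spec hkl x β⟩
  have hch := H.choose_spec
  apply ext_of_Es
  intro T
  have h1 := hodge_val hkl x β H.choose hch T
  have h2 := hodge_val hkl x β (Phi hkl x β) (Phi_spec hkl x β) T
  have := h1.trans h2.symm
  exact mul_left_cancel₀ (sgn_ne_zero hkl (cS2 hkl T)) this

end Hodge

section Poly
open MvPolynomial
variable {N : ℕ}

/-- division with remainder by `X i`, with remainder the evaluation at `x i = 0` -/
lemma exists_div_rem (i : Fin N) (P : MvPolynomial (Fin N) ℝ) :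
    ∃ Q R : MvPolynomial (Fin N) ℝ, P = X i * Q + R ∧
      ∀ x : Vec N, eval x R = eval (Function.update x i 0) P := by
  induction P using MvPolynomial.induction_on with
  | C a =>
    exact ⟨0, C a, by ring, fun x => by simp⟩
  | add p q hp hq =>
    obtain ⟨Qp, Rp, hp1, hp2⟩ := hp
    obtain ⟨Qq, Rq, hq1, hq2⟩ := hq
    exact ⟨Qp + Qq, Rp + Rq, by rw [hp1, hq1]; ring,
      fun x => by simp [hp2 x, hq2 x]⟩
  | mul_X p j hp =>
    obtain ⟨Q, R, h1, h2⟩ := hp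
    by_cases hij : j = i
    · subst hij
      refine ⟨p, 0, by ring, fun x => ?_⟩
      simp [Function.update_self]
    · refine ⟨Q * X j, R * X j, by rw [h1]; ring, fun x => ?_⟩
      simp only [map_mul, eval_X, h2 x]
      congr 1
      simp [Function.update_of_ne, Function.update_apply, hij]

lemma X_dvd_of_eval_zero (i : Fin N) (P : MvPolynomial (Fin N) ℝ)
    (h : ∀ x : Vec N, x i = 0 → eval x P = 0) : X i ∣ P := by
  obtain ⟨Q, R, h1, h2⟩ := exists_div_rem i P
  have hR : R = 0 := by
    apply MvPolynomial.funext
    intro x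
    rw [h2 x, map_zero]
    exact h _ (by simp)
  rw [h1, hR, add_zero]
  exact Dvd.intro Q rfl

lemma prod_X_dvd_of_eval_zero (s : Finset (Fin N)) (P : MvPolynomial (Fin N) ℝ)
    (h : ∀ x : Vec N, ∀ i ∈ s, x i = 0 → eval x P = 0) : (∏ i ∈ s, X i) ∣ P := by
  classical
  induction s using Finset.induction_on generalizing P with
  | empty => simp
  | @insert a s ha ih =>
    obtain ⟨Q, hQ⟩ := X_dvd_of_eval_zero a P (fun x hx => h x a (Finset.mem_insert_self a s) hx)
    have hQ0 : ∀ x : Vec N, ∀ i ∈ s, x i = 0 → eval x Q = 0 := by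
      intro x i his hxi
      -- first for x with x a ≠ 0, then by continuity
      have key : ∀ y : ℝ, y ≠ 0 → eval (Function.update x a y) Q = 0 := by
        intro y hy
        have hne : i ≠ a := fun hc => ha (hc ▸ his)
        have h0 : eval (Function.update x a y) P = 0 := by
          apply h _ i (Finset.mem_insert_of_mem his)
          rw [Function.update_of_ne hne, hxi]
        rw [hQ, map_mul, eval_X, Function.update_self] at h0
        exact (mul_eq_zero.mp h0).resolve_left hy
      have hcont : Continuous fun y : ℝ => eval (Function.update x a y) Q := by
        apply (MvPolynomial.continuous_eval Q).comp
        exact continuous_pi fun j => by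
          by_cases hj : j = a
          · subst hj; simpa [Function.update_self] using
              (continuous_id.congr (fun y => by simp [Function.update_self]))
          · simpa using (continuous_const.congr
              (fun y => by simp [Function.update_of_ne hj] : ∀ y : ℝ, x j = Function.update x a y j))
      have hEq : ∀ y : ℝ, eval (Function.update x a y) Q = 0 := by
        have hd : Dense {y : ℝ | y ≠ 0} := dense_compl_singleton 0
        have := Continuous.ext_on hd hcont continuous_const
          (fun y hy => key y hy)
        intro y
        have := congrFun this y
        simpa using this
      have := hEq (x a)
      rwa [Function.update_eq_self] at this
    obtain ⟨Q', hQ'⟩ := ih Q hQ0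
    rw [Finset.prod_insert ha, hQ, hQ']
    exact ⟨Q', by ring⟩

lemma homog_of_mul (p q : MvPolynomial (Fin N) ℝ) (m n : ℕ)
    (hp : p.IsHomogeneous m) (hpq : (p * q).IsHomogeneous (m + n)) (hp0 : p ≠ 0) :
    q.IsHomogeneous n := by
  classical
  have hdecomp : q = ∑ d ∈ Finset.range (q.totalDegree + 1), homogeneousComponent d q :=
    (sum_homogeneousComponent q).symm
  have key : p * q = p * homogeneousComponent n q := by
    have h1 : p * q = ∑ d ∈ Finset.range (q.totalDegree + 1), p * homogeneousComponent d q := by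
      conv_lhs => rw [hdecomp]
      rw [Finset.mul_sum]
    have h2 : homogeneousComponent (m + n) (p * q) = p * q :=
      by rw [homogeneousComponent_of_mem hpq]; simp
    have h3 : ∀ d, homogeneousComponent (m + n) (p * homogeneousComponent d q)
        = if d = n then p * homogeneousComponent d q else 0 := by
      intro d
      have hh : (p * homogeneousComponent d q).IsHomogeneous (m + d) :=
        hp.mul (homogeneousComponent_isHomogeneous d q)
      rw [homogeneousComponent_of_mem hh]
      by_cases hd : d = n
      · subst hd; simp
      · rw [if_neg (by omega), if_neg hd]
    rw [← h2, h1, map_sum]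
    rw [Finset.sum_congr rfl (fun d _ => h3 d)]
    rw [Finset.sum_ite_eq' (Finset.range (q.totalDegree + 1)) n
      (fun d => p * homogeneousComponent d q)]
    by_cases hn : n ∈ Finset.range (q.totalDegree + 1)
    · rw [if_pos hn]
    · rw [if_neg hn, homogeneousComponent_eq_zero, mul_zero]
      simp only [Finset.mem_range] at hn
      omega
  have : p * (q - homogeneousComponent n q) = 0 := by rw [mul_sub, key]; ring
  have hq : q - homogeneousComponent n q = 0 := by
    rcases mul_eq_zero.mp this with h | h
    · exact absurd h hp0
    · exact h
  have : q = homogeneousComponent n q := by linear_combination hq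
  rw [this]
  exact homogeneousComponent_isHomogeneous n q

end Poly

section Main
open MvPolynomial
variable {N k l : ℕ}

lemma prodX_homog (S : Sub N k) :
    (∏ i ∈ S.1, (X i : MvPolynomial (Fin N) ℝ)).IsHomogeneous k := by
  have := MvPolynomial.IsHomogeneous.prod S.1 (fun i => (X i : MvPolynomial (Fin N) ℝ))
    (fun _ => 1) (fun i _ => isHomogeneous_X _ i)
  have hs : ∑ _i ∈ S.1, 1 = k := by rw [Finset.sum_const, smul_eq_mul, mul_one, S.2]
  rwa [hs] at this

lemma prodX_ne_zero (S : Sub N k) :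
    (∏ i ∈ S.1, (X i : MvPolynomial (Fin N) ℝ)) ≠ 0 :=
  Finset.prod_ne_zero_iff.mpr (fun i _ => X_ne_zero i)

lemma part1_poly (hkl : k + l = N) (r : ℕ) (β : Vec N → (Vec N [⋀^Fin k]→ₗ[ℝ] ℝ))
    (hβ : HomPolyForm r β) :
    HomPolyForm (r + k) (fun x => hodge hkl x (β x)) := by
  intro v
  choose Qf hQhom hQeval using fun S : Sub N k => hβ (Es S)
  refine ⟨∑ S : Sub N k, MvPolynomial.C (sgn hkl S * bform (cS hkl S) v) * Qf S *
    (∏ i ∈ S.1, X i), ?_, ?_⟩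
  · apply MvPolynomial.IsHomogeneous.sum
    intro S _
    exact ((hQhom S).C_mul _).mul (prodX_homog S)
  · intro x
    dsimp only
    rw [hodge_eq, Phi, sum_apply, map_sum]
    apply Finset.sum_congr rfl
    intro S _
    rw [AlternatingMap.smul_apply, smul_eq_mul]
    rw [map_mul, map_mul, eval_C, hQeval S x]
    have : eval x (∏ i ∈ S.1, (X i : MvPolynomial (Fin N) ℝ)) = ∏ i ∈ S.1, x i := by
      rw [eval_prod]; simp
    rw [this]
    ring

lemma part1_face (hkl : k + l = N) (x : Vec N) (b : Vec N [⋀^Fin k]→ₗ[ℝ] ℝ)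
    (i : Fin N) (hx : x i = 0) : faceRestrict i (hodge hkl x b) = 0 := by
  rw [hodge_eq, Phi]
  ext u
  rw [faceRestrict, AlternatingMap.compLinearMap_apply, sum_apply, AlternatingMap.zero_apply]
  apply Finset.sum_eq_zero
  intro S _
  rw [AlternatingMap.smul_apply, smul_eq_mul]
  by_cases hiS : i ∈ S.1
  · rw [Finset.prod_eq_zero hiS hx]; ring
  · have hiC : i ∈ (cS hkl S).1 := Finset.mem_compl.mpr hiS
    have hb : bform (cS hkl S) (fun j => ((LinearMap.ker (LinearMap.proj i : Vec N →ₗ[ℝ] ℝ)).subtype (u j))) = 0 := by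
      rw [bform, covWedge_apply]
      apply Matrix.det_eq_zero_of_column_eq_zero
        (((cS hkl S).1.orderIsoOfFin (cS hkl S).2).symm ⟨i, hiC⟩)
      intro r'
      simp only [Matrix.of_apply, LinearMap.proj_apply]
      have h1 : (((cS hkl S).1.orderIsoOfFin (cS hkl S).2)
          (((cS hkl S).1.orderIsoOfFin (cS hkl S).2).symm ⟨i, hiC⟩) : Fin N) = i := by simp
      rw [h1]
      have := (u r').2
      rw [LinearMap.mem_ker] at this
      exact this
    rw [hb]; ring

lemma part2_surj (hkl : k + l = N) (r : ℕ) (η : Vec N → (Vec N [⋀^Fin l]→ₗ[ℝ] ℝ))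
    (hη : HomPolyForm (r + k) η)
    (hface : ∀ (i : Fin N) (x : Vec N), x i = 0 → faceRestrict i (η x) = 0) :
    ∃ β : Vec N → (Vec N [⋀^Fin k]→ₗ[ℝ] ℝ), HomPolyForm r β ∧
      ∀ x, hodge hkl x (β x) = η x := by
  choose Pf hPhom hPeval using fun T : Sub N l => hη (Es T)
  have hvan : ∀ S : Sub N k, ∀ x : Vec N, ∀ i ∈ S.1, x i = 0 →
      eval x (Pf (cS hkl S)) = 0 := by
    intro S x i hiS hxi
    rw [hPeval]
    -- the tuple Es (cS S) lies in ker (proj i)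
    have hker : ∀ j : Fin l, Es (cS hkl S) j ∈ LinearMap.ker (LinearMap.proj i : Vec N →ₗ[ℝ] ℝ) := by
      intro j
      rw [LinearMap.mem_ker, LinearMap.proj_apply]
      have hne : (((cS hkl S).1.orderIsoOfFin (cS hkl S).2) j : Fin N) ≠ i := by
        intro hc
        have := Finset.coe_mem (((cS hkl S).1.orderIsoOfFin (cS hkl S).2) j)
        rw [hc] at this
        exact (Finset.mem_compl.mp this) hiS
      show Es (cS hkl S) j i = 0
      rw [Es, E, Pi.single_apply, if_neg (fun hc => hne hc.symm)]
    have h0 := hface i x hxi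
    have := DFunLike.congr_fun h0 (fun j => ⟨Es (cS hkl S) j, hker j⟩)
    rw [faceRestrict, AlternatingMap.compLinearMap_apply, AlternatingMap.zero_apply] at this
    exact this
  choose qf hqf using fun S : Sub N k =>
    prod_X_dvd_of_eval_zero S.1 (Pf (cS hkl S)) (hvan S)
  have hQhom : ∀ S : Sub N k, (homogeneousComponent r (qf S)).IsHomogeneous r :=
    fun S => homogeneousComponent_isHomogeneous r (qf S)
  have hmul : ∀ S : Sub N k, (∏ i ∈ S.1, X i) * homogeneousComponent r (qf S) = Pf (cS hkl S) := by
    intro S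
    by_cases h0 : Pf (cS hkl S) = 0
    · have hz : (∏ i ∈ S.1, (X i : MvPolynomial (Fin N) ℝ)) * qf S = 0 := by
        rw [← hqf S, h0]
      have : qf S = 0 := (mul_eq_zero.mp hz).resolve_left (prodX_ne_zero S)
      rw [this, h0]
      simp
    · have hhom : (qf S).IsHomogeneous r := by
        apply homog_of_mul (∏ i ∈ S.1, X i) (qf S) k r (prodX_homog S) _ (prodX_ne_zero S)
        rw [← hqf S]
        have := hPhom (cS hkl S)
        rwa [Nat.add_comm r k] at this
      have : homogeneousComponent r (qf S) = qf S := by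
        rw [homogeneousComponent_of_mem ((mem_homogeneousSubmodule _ _).mpr hhom), if_pos rfl]
      rw [this, ← hqf S]
  refine ⟨fun x => ∑ S : Sub N k, (sgn hkl S * eval x (homogeneousComponent r (qf S))) • bform S, ?_, ?_⟩
  · intro v
    refine ⟨∑ S : Sub N k, MvPolynomial.C (sgn hkl S * bform S v) * homogeneousComponent r (qf S), ?_, ?_⟩
    · exact MvPolynomial.IsHomogeneous.sum _ _ _ (fun S _ => (hQhom S).C_mul _)
    · intro x
      rw [map_sum, sum_apply]
      apply Finset.sum_congr rfl
      intro S _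
      rw [AlternatingMap.smul_apply, smul_eq_mul, map_mul, eval_C]
      ring
  · intro x
    rw [hodge_eq]
    apply ext_of_Es
    intro T
    have hT : T = cS hkl (cS2 hkl T) := (cS_cS2 hkl T).symm
    rw [hT, Phi_Es]
    set S := cS2 hkl T with hS
    -- β x (Es S)
    have hβval : (∑ S' : Sub N k, (sgn hkl S' * eval x (homogeneousComponent r (qf S'))) • bform S') (Es S)
        = sgn hkl S * eval x (homogeneousComponent r (qf S)) := by
      rw [sum_apply]
      have : ∀ S' : Sub N k, ((sgn hkl S' * eval x (homogeneousComponent r (qf S'))) • bform S') (Es S)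
          = if S = S' then sgn hkl S * eval x (homogeneousComponent r (qf S)) else 0 := by
        intro S'
        rw [AlternatingMap.smul_apply, bform_Es, smul_eq_mul]
        by_cases hss : S = S'
        · subst hss; simp
        · rw [if_neg hss, if_neg hss, mul_zero]
      rw [Finset.sum_congr rfl (fun S' _ => this S')]
      simp
    rw [hβval]
    have : sgn hkl S * ((∏ i ∈ S.1, x i) * (sgn hkl S * eval x (homogeneousComponent r (qf S))))
        = (∏ i ∈ S.1, x i) * eval x (homogeneousComponent r (qf S)) := by
      linear_combination ((∏ i ∈ S.1, x i) * eval x (homogeneousComponent r (qf S))) * sgn_mul_self hkl S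
    rw [this]
    have : (∏ i ∈ S.1, x i) * eval x (homogeneousComponent r (qf S)) = eval x ((∏ i ∈ S.1, X i) * homogeneousComponent r (qf S)) := by
      rw [map_mul, eval_prod]; simp
    rw [this, hmul S, hPeval]

lemma part3_inj (hkl : k + l = N) (r : ℕ) (β β' : Vec N → (Vec N [⋀^Fin k]→ₗ[ℝ] ℝ))
    (hβ : HomPolyForm r β) (hβ' : HomPolyForm r β')
    (heq : ∀ x, hodge hkl x (β x) = hodge hkl x (β' x)) : β = β' := by
  have hval : ∀ (S : Sub N k) (x : Vec N), β x (Es S) = β' x (Es S) := by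
    intro S
    have hprod : ∀ x : Vec N, (∏ i ∈ S.1, x i) * β x (Es S)
        = (∏ i ∈ S.1, x i) * β' x (Es S) := by
      intro x
      have h1 := heq x
      rw [hodge_eq, hodge_eq] at h1
      have h2 := DFunLike.congr_fun h1 (Es (cS hkl S))
      rw [Phi_Es, Phi_Es] at h2
      exact mul_left_cancel₀ (sgn_ne_zero hkl S) h2
    obtain ⟨Q, hQhom, hQev⟩ := hβ (Es S)
    obtain ⟨Q', hQhom', hQev'⟩ := hβ' (Es S)
    have hpoly : (∏ i ∈ S.1, X i) * Q = (∏ i ∈ S.1, X i) * Q' := by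
      apply MvPolynomial.funext
      intro x
      rw [map_mul, map_mul, eval_prod]
      simp only [eval_X]
      rw [hQev x, hQev' x]
      exact hprod x
    have hQQ : Q = Q' := mul_left_cancel₀ (prodX_ne_zero S) hpoly
    intro x
    rw [← hQev x, ← hQev' x, hQQ]
  funext x
  apply ext_of_Es
  intro S
  exact hval S x

end Main


/-- `*_g` maps `H_r Λᵏ` (forms with homogeneous polynomial coefficients of degree `r`)
isomorphically onto `H̊_{r+k} Λ^{n+1−k}` (forms with homogeneous polynomial coefficients of
degree `r+k` with vanishing pullback to every hyperplane `{xᵢ = 0}`): it lands in that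
space, it is surjective onto it, and it is injective. -/
theorem stmt18 (n k l r : ℕ) (h : k + l = n + 1) :
    (∀ β : Form (n + 1) k, HomPolyForm r β →
        HomPolyForm (r + k) (fun x => hodge h x (β x))
        ∧ ∀ (i : Fin (n + 1)) (x : Vec (n + 1)), x i = 0 →
            faceRestrict i (hodge h x (β x)) = 0)
    ∧ (∀ η : Form (n + 1) l, HomPolyForm (r + k) η →
        (∀ (i : Fin (n + 1)) (x : Vec (n + 1)), x i = 0 → faceRestrict i (η x) = 0) →
        ∃ β : Form (n + 1) k, HomPolyForm r β ∧ ∀ x, hodge h x (β x) = η x)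
    ∧ (∀ β β' : Form (n + 1) k, HomPolyForm r β → HomPolyForm r β' →
        (∀ x, hodge h x (β x) = hodge h x (β' x)) → β = β') := by
  refine ⟨?_, ?_, ?_⟩
  · intro β hβ
    exact ⟨part1_poly h r β hβ, fun i x hx => part1_face h x (β x) i hx⟩
  · intro η hη hface
    exact part2_surj h r η hη hface
  · intro β β' hβ hβ' heq
    exact part3_inj h r β β' hβ hβ' heq


end FEEC
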